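/- Let H be a set with a distinguished element 0 and a map Σ : H^ℕ → H satisfying: (A1) if x = (x_i) with x_i = 0 for all i ≠ 0 then Σ(x) = x_0; and (A2) for every doubly indexed family (x_{i,j}) and every bijection π : ℕ × ℕ → ℕ, Σ_i Σ_j x_{i,j} = Σ_k x_{π⁻¹(k)}. Then the binary operation a + b := Σ(x) where x_0 = a, x_1 = b, and x_i = 0 for i ≥ 2, makes H a commutative monoid with identity 0. -/
import Mathlib


/-- An ℵ₀-monoid: a set with 0 and a countable summation map satisfying (A1) and (A2). -/
structure AlephMonoid (H : Type*) where
  zero : H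
  sum : (ℕ → H) → H
  a1 : ∀ x : ℕ → H, (∀ i, i ≠ 0 → x i = zero) → sum x = x 0
  a2 : ∀ (x : ℕ × ℕ → H) (π : ℕ × ℕ ≃ ℕ),
    sum (fun i => sum (fun j => x (i, j))) = sum (fun k => x (π.symm k))

namespace AlephMonoid

variable {H : Type*}

/-- The induced binary addition. -/
def add (M : AlephMonoid H) (a b : H) : H :=
  M.sum (fun i => if i = 0 then a else if i = 1 then b else M.zero)

/-- ℵ₀·a : the countable sum of copies of `a`. -/
def infMul (M : AlephMonoid H) (a : H) : H := M.sum (fun _ => a)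

/-- n·a : finite multiples. -/
def nsmul (M : AlephMonoid H) : ℕ → H → H
  | 0, _ => M.zero
  | n + 1, a => M.add a (M.nsmul n a)

/-- `y ∈ add(x)` : `y` is a direct summand of a finite multiple of `x`. -/
def inAdd (M : AlephMonoid H) (x y : H) : Prop :=
  ∃ z : H, ∃ n : ℕ, 1 ≤ n ∧ M.add y z = M.nsmul n x

/-- Multiplication by a cardinal α with 0 ≤ α ≤ ℵ₀ (`none` stands for ℵ₀). -/
def cmul (M : AlephMonoid H) : Option ℕ → H → H
  | some n, a => M.nsmul n a
  | none, a => M.infMul a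

/-- The finite sum `Σ_{i=a}^{b} f i`, expressed via the countable sum of a
family supported on the interval `[a, b]`. -/
def intervalSum (M : AlephMonoid H) (f : ℕ → H) (a b : ℕ) : H :=
  M.sum (fun i => if a ≤ i ∧ i ≤ b then f i else M.zero)

end AlephMonoid

/-- the induced binary addition makes H a commutative monoid with identity 0. -/
theorem alephMonoid_add_commMonoid {H : Type*} (M : AlephMonoid H) :
    (∀ a b : H, M.add a b = M.add b a) ∧
    (∀ a b c : H, M.add (M.add a b) c = M.add a (M.add b c)) ∧
    (∀ a : H, M.add a M.zero = a) ∧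
    (∀ a : H, M.add M.zero a = a) := by
  -- sums are invariant under permutations of ℕ
  have perm : ∀ (z : ℕ → H) (σ : ℕ ≃ ℕ),
      M.sum (fun k => z (σ k)) = M.sum z := by
    intro z σ
    have h1 := M.a2 (fun p => z (Nat.pairEquiv p)) Nat.pairEquiv
    have h2 := M.a2 (fun p => z (Nat.pairEquiv p)) (Nat.pairEquiv.trans σ.symm)
    simp only [Equiv.apply_symm_apply, Equiv.symm_trans_apply, Equiv.symm_symm] at h1 h2
    exact h2.symm.trans h1
  -- identity on the right
  have idr : ∀ a : H, M.add a M.zero = a := by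
    intro a
    have := M.a1 (fun i => if i = 0 then a else if i = 1 then M.zero else M.zero)
      (by intro i hi; simp [hi])
    simpa [AlephMonoid.add] using this
  -- commutativity
  have comm : ∀ a b : H, M.add a b = M.add b a := by
    intro a b
    have := perm (fun i => if i = 0 then b else if i = 1 then a else M.zero)
      (Equiv.swap 0 1)
    unfold AlephMonoid.add
    rw [← this]
    congr 1
    funext k
    rcases Nat.lt_or_ge k 2 with h | h
    · interval_cases k <;> simp [Equiv.swap_apply_left, Equiv.swap_apply_right]
    · have h0 : k ≠ 0 := by omega
      have h1 : k ≠ 1 := by omega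
      simp [Equiv.swap_apply_of_ne_of_ne h0 h1, h0, h1]
  -- associativity
  have assoc : ∀ a b c : H, M.add (M.add a b) c = M.add a (M.add b c) := by
    intro a b c
    set t : ℕ → H := fun k =>
      if k = 0 then a else if k = 1 then b else if k = 2 then c else M.zero with ht
    -- LHS equals M.sum t
    have hL : M.add (M.add a b) c = M.sum t := by
      set x : ℕ × ℕ → H := fun p =>
        if p = (0,0) then a else if p = (0,1) then b else if p = (1,0) then c
        else M.zero with hx
      have h := M.a2 x Nat.pairEquiv
      have hinner : (fun i => M.sum (fun j => x (i, j))) =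
          (fun i => if i = 0 then M.add a b else if i = 1 then c else M.zero) := by
        funext i
        rcases Nat.lt_or_ge i 2 with hi | hi
        · interval_cases i
          · simp only [if_pos rfl]
            unfold AlephMonoid.add
            congr 1
            funext j
            simp only [hx, Prod.mk.injEq]
            rcases Nat.lt_or_ge j 2 with hj | hj
            · interval_cases j <;> simp
            · have j0 : j ≠ 0 := by omega
              have j1 : j ≠ 1 := by omega
              simp [j0, j1]
          · simp only [if_neg one_ne_zero, if_pos rfl]
            rw [M.a1]
            · simp [hx]
            · intro j hj
              simp [hx, Prod.ext_iff, hj]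
        · have i0 : i ≠ 0 := by omega
          have i1 : i ≠ 1 := by omega
          simp only [i0, i1, if_false]
          rw [M.a1]
          · simp [hx, Prod.ext_iff, i0, i1]
          · intro j hj
            simp [hx, Prod.ext_iff, i0, i1]
      have hflat : (fun k => x (Nat.pairEquiv.symm k)) = t := by
        funext k
        simp only [hx, ht, Equiv.symm_apply_eq]
        have e0 : Nat.pairEquiv (0,0) = 0 := by decide
        have e1 : Nat.pairEquiv (0,1) = 1 := by decide
        have e2 : Nat.pairEquiv (1,0) = 2 := by decide
        rw [e0, e1, e2]
      rw [hinner, hflat] at h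
      exact h
    -- RHS equals M.sum t, using a rearranged pairing
    have hR : M.add a (M.add b c) = M.sum t := by
      set x : ℕ × ℕ → H := fun p =>
        if p = (0,0) then a else if p = (1,0) then b else if p = (1,1) then c
        else M.zero with hx
      set π : ℕ × ℕ ≃ ℕ :=
        Nat.pairEquiv.trans ((Equiv.swap 1 2).trans (Equiv.swap 2 3)) with hπ
      have h := M.a2 x π
      have hinner : (fun i => M.sum (fun j => x (i, j))) =
          (fun i => if i = 0 then a else if i = 1 then M.add b c else M.zero) := by
        funext i
        rcases Nat.lt_or_ge i 2 with hi | hi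
        · interval_cases i
          · simp only [if_pos rfl]
            rw [M.a1]
            · simp [hx]
            · intro j hj
              simp [hx, Prod.ext_iff, hj]
          · simp only [if_neg one_ne_zero, if_pos rfl]
            unfold AlephMonoid.add
            congr 1
            funext j
            simp only [hx, Prod.mk.injEq]
            rcases Nat.lt_or_ge j 2 with hj | hj
            · interval_cases j <;> simp
            · have j0 : j ≠ 0 := by omega
              have j1 : j ≠ 1 := by omega
              simp [j0, j1]
        · have i0 : i ≠ 0 := by omega
          have i1 : i ≠ 1 := by omega
          simp only [i0, i1, if_false]
          rw [M.a1]
          · simp [hx, Prod.ext_iff, i0, i1]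
          · intro j hj
            simp [hx, Prod.ext_iff, i0, i1]
      have hflat : (fun k => x (π.symm k)) = t := by
        funext k
        simp only [hx, ht, Equiv.symm_apply_eq]
        have e0 : π (0,0) = 0 := by simp [hπ]; decide
        have e1 : π (1,0) = 1 := by simp [hπ]; decide
        have e2 : π (1,1) = 2 := by simp [hπ]; decide
        rw [e0, e1, e2]
      rw [hinner, hflat] at h
      exact h
    rw [hL, hR]
  exact ⟨comm, assoc, idr, fun a => (comm M.zero a).trans (idr a)⟩
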